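/- Let m ≥ 1 and let μ₁,…,μ_m be real numbers that are ℚ-linearly independent. Then for every s₀ ∈ ℝ, the image of the half-line (s₀, ∞) under the map s ↦ (μ₁ s, …, μ_m s) taken modulo 2πℤ^m is dense in the torus ℝ^m / 2πℤ^m. -/

import Mathlib

set_option maxHeartbeats 1000000

open Set Submodule

theorem aux_dense_subgroup (m : ℕ) (μ : Fin m → ℝ)
    (hindep : ∀ q : Fin m → ℚ, q ≠ 0 → ∑ j, (q j : ℝ) * μ j ≠ 0) :
    Dense (X := Fin m → ℝ) ↑(AddSubgroup.closure
      (Set.range (fun s : ℝ => s • μ) ∪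
        Set.range (fun j : Fin m => Pi.single j (2 * Real.pi)))) := by
  set Δ : AddSubgroup (Fin m → ℝ) := AddSubgroup.closure
      (Set.range (fun s : ℝ => s • μ) ∪
        Set.range (fun j : Fin m => Pi.single j (2 * Real.pi))) with hΔ
  set Γ : AddSubgroup (Fin m → ℝ) := Δ.topologicalClosure with hΓ
  have hΓclosed : IsClosed (Γ : Set (Fin m → ℝ)) := Δ.isClosed_topologicalClosure
  have hμΓ : ∀ t : ℝ, t • μ ∈ Γ := fun t =>
    Δ.le_topologicalClosure (AddSubgroup.subset_closure (Or.inl ⟨t, rfl⟩))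
  have heΓ : ∀ j, Pi.single j (2 * Real.pi) ∈ Γ := fun j =>
    Δ.le_topologicalClosure (AddSubgroup.subset_closure (Or.inr ⟨j, rfl⟩))
  -- the subspace of directions fully contained in Γ
  set V : Submodule ℝ (Fin m → ℝ) :=
    { carrier := {x | ∀ t : ℝ, t • x ∈ Γ}
      add_mem' := fun hx hy t => by simpa [smul_add] using Γ.add_mem (hx t) (hy t)
      zero_mem' := fun t => by simpa using Γ.zero_mem
      smul_mem' := fun c x hx t => by simpa [smul_smul] using hx (t * c) } with hV
  have hVΓ : (V : Set (Fin m → ℝ)) ⊆ Γ := fun x hx => by simpa using hx 1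
  have hμV : μ ∈ V := fun t => by simpa using hμΓ t
  obtain ⟨W, hcompl⟩ := Submodule.exists_isCompl V
  have hWclosed : IsClosed (W : Set (Fin m → ℝ)) := W.closed_of_finiteDimensional
  -- Γ ∩ W is discrete near 0
  have hdisc : ∃ ε > (0:ℝ), ∀ x : Fin m → ℝ, x ∈ Γ → x ∈ W → ‖x‖ < ε → x = 0 := by
    by_contra hc
    push_neg at hc
    choose f hf1 hf2 hf3 hf4 using fun n : ℕ => hc (1/(n+1)) (by positivity)
    have hfn : ∀ n : ℕ, ‖f n‖ ≠ 0 := fun n => norm_ne_zero_iff.2 (hf4 n)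
    set u : ℕ → (Fin m → ℝ) := fun n => ‖f n‖⁻¹ • f n with hu
    have hus : ∀ n, u n ∈ Metric.sphere (0 : Fin m → ℝ) 1 ∩ W := by
      intro n
      constructor
      · simp [hu, norm_smul, abs_of_nonneg (norm_nonneg (f n)),
          inv_mul_cancel₀ (hfn n)]
      · exact W.smul_mem _ (hf2 n)
    have hK : IsCompact (Metric.sphere (0 : Fin m → ℝ) 1 ∩ W) :=
      (isCompact_sphere _ _).inter_right hWclosed
    obtain ⟨l, hl, ψ, hψ, hψl⟩ := hK.tendsto_subseq hus
    -- l ∈ V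
    have hlV : l ∈ V := by
      intro t
      have key : Filter.Tendsto (fun n => (⌊t / ‖f (ψ n)‖⌋ : ℤ) • f (ψ n))
          Filter.atTop (nhds (t • l)) := by
        have h1 : ∀ n : ℕ, (⌊t / ‖f (ψ n)‖⌋ : ℤ) • f (ψ n)
            = ((⌊t / ‖f (ψ n)‖⌋ : ℝ) * ‖f (ψ n)‖) • u (ψ n) := by
          intro n
          rw [hu]
          rw [smul_smul, mul_assoc, mul_inv_cancel₀ (hfn _), mul_one, Int.cast_smul_eq_zsmul]
        rw [funext h1]
        have hc : Filter.Tendsto (fun n => (⌊t / ‖f (ψ n)‖⌋ : ℝ) * ‖f (ψ n)‖)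
            Filter.atTop (nhds t) := by
          rw [tendsto_iff_dist_tendsto_zero]
          apply squeeze_zero (fun n => dist_nonneg)
            (g := fun n : ℕ => (1:ℝ)/(n+1))
          · intro n
            have h2 : 0 < ‖f (ψ n)‖ := (hfn _).symm.lt_of_le (norm_nonneg _)
            have h3 : dist ((⌊t / ‖f (ψ n)‖⌋ : ℝ) * ‖f (ψ n)‖) t ≤ ‖f (ψ n)‖ := by
              rw [Real.dist_eq]
              have hub : (⌊t / ‖f (ψ n)‖⌋ : ℝ) * ‖f (ψ n)‖ ≤ t := by
                have h4 := Int.floor_le (t / ‖f (ψ n)‖)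
                calc (⌊t / ‖f (ψ n)‖⌋ : ℝ) * ‖f (ψ n)‖ ≤ (t / ‖f (ψ n)‖) * ‖f (ψ n)‖ :=
                      mul_le_mul_of_nonneg_right h4 (norm_nonneg _)
                  _ = t := div_mul_cancel₀ t (hfn _)
              have hlb : t - ‖f (ψ n)‖ < (⌊t / ‖f (ψ n)‖⌋ : ℝ) * ‖f (ψ n)‖ := by
                have h5 := Int.sub_one_lt_floor (t / ‖f (ψ n)‖)
                have h6 : (t / ‖f (ψ n)‖ - 1) * ‖f (ψ n)‖ < (⌊t / ‖f (ψ n)‖⌋ : ℝ) * ‖f (ψ n)‖ :=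
                  mul_lt_mul_of_pos_right h5 h2
                calc t - ‖f (ψ n)‖ = (t / ‖f (ψ n)‖ - 1) * ‖f (ψ n)‖ := by
                      field_simp
                  _ < _ := h6
              rw [abs_le]
              constructor <;> [linarith; linarith]
            refine h3.trans ?_
            have h5 := hf3 (ψ n)
            have h6 : (ψ n : ℝ) + 1 ≥ (n : ℝ) + 1 := by
              have h7 : n ≤ ψ n := hψ.le_apply
              have h8 : (n : ℝ) ≤ (ψ n : ℝ) := Nat.cast_le.2 h7
              linarith
            refine le_trans h5.le ?_
            apply one_div_le_one_div_of_le (by positivity) h6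
          · exact tendsto_one_div_add_atTop_nhds_zero_nat
        exact hc.smul hψl
      exact hΓclosed.mem_of_tendsto key
        (Filter.Eventually.of_forall fun n => Γ.zsmul_mem (hf1 (ψ n)) _)
    have hlW : l ∈ W := hl.2
    have hl0 : l = 0 := by
      have := hcompl.disjoint
      exact (Submodule.disjoint_def.1 this) l hlV hlW
    have : ‖l‖ = 1 := by simpa using hl.1
    rw [hl0] at this
    simp at this
  obtain ⟨ε, hε, hiso⟩ := hdisc
  have hVtop : V = ⊤ := by
    by_contra hVne
    have hWbot : W ≠ ⊥ := by
      intro h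
      apply hVne
      have h2 := hcompl.sup_eq_top
      rwa [h, sup_bot_eq] at h2
    set P : (Fin m → ℝ) →ₗ[ℝ] W := W.linearProjOfIsCompl V hcompl.symm with hP
    have hPV : ∀ x ∈ V, P x = 0 := fun x hx =>
      Submodule.projectionOnto_apply_of_mem_right hcompl.symm hx
    have hPΓ : ∀ x ∈ Γ, (P x : Fin m → ℝ) ∈ Γ := by
      intro x hx
      have hsum : (V.linearProjOfIsCompl W hcompl x : Fin m → ℝ) + (P x : Fin m → ℝ) = x :=
        Submodule.projection_add_projection_eq_self hcompl x
      have h3 : (P x : Fin m → ℝ) = x - (V.linearProjOfIsCompl W hcompl x : Fin m → ℝ) :=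
        eq_sub_of_add_eq' hsum
      rw [h3]
      exact Γ.sub_mem hx (hVΓ (V.linearProjOfIsCompl W hcompl x).2)
    set v : Fin m → W := fun j => P (Pi.single j (2 * Real.pi)) with hv
    have hvΓ : ∀ j, (v j : Fin m → ℝ) ∈ Γ := fun j => hPΓ _ (heΓ j)
    set L : Submodule ℤ W := Submodule.span ℤ (Set.range v) with hL
    have hLΓ : ∀ y : W, y ∈ L → (y : Fin m → ℝ) ∈ Γ := by
      intro y hy
      induction hy using Submodule.span_induction with
      | mem x hx => obtain ⟨j, rfl⟩ := hx; exact hvΓ j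
      | zero => simpa using Γ.zero_mem
      | add x y _ _ hx hy => simpa using Γ.add_mem hx hy
      | smul k x _ hx => simpa using Γ.zsmul_mem hx k
    haveI hdiscL : DiscreteTopology L := by
      rw [discreteTopology_iff_isOpen_singleton_zero]
      have hset : {(0 : L)} = ((↑) : L → W) ⁻¹' Metric.ball (0 : W) ε := by
        ext y
        simp only [Set.mem_singleton_iff, Set.mem_preimage, Metric.mem_ball, dist_zero_right]
        constructor
        · rintro rfl; simpa using hε
        · intro hy
          have hnorm : ‖((y : W) : Fin m → ℝ)‖ < ε := hy
          have h0 := hiso _ (hLΓ _ y.2) (y : W).2 hnorm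
          exact Subtype.ext (Subtype.ext h0)
      rw [hset]
      exact Metric.isOpen_ball.preimage continuous_subtype_val
    have hspanv : Submodule.span ℝ (Set.range v) = (⊤ : Submodule ℝ W) := by
      have h1 : Set.range v = ⇑P '' Set.range (fun j : Fin m => Pi.single j (2 * Real.pi)) := by
        rw [← Set.range_comp]; rfl
      have h2 : Submodule.span ℝ
          (Set.range fun j : Fin m => Pi.single j (2 * Real.pi)) = ⊤ := by
        rw [eq_top_iff]
        rintro x -
        have hdecomp : x = ∑ j, (x j / (2 * Real.pi)) • (Pi.single j (2 * Real.pi) : Fin m → ℝ) := by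
          funext i
          rw [Finset.sum_apply]
          have : ∀ j, ((x j / (2 * Real.pi)) • (Pi.single j (2 * Real.pi) : Fin m → ℝ)) i
              = if i = j then x j else 0 := by
            intro j
            by_cases h : i = j <;>
              simp [Pi.single_apply, h, div_mul_cancel₀, Real.pi_ne_zero, Real.two_pi_pos.ne']
          rw [Finset.sum_congr rfl fun j _ => this j]
          simp
        rw [hdecomp]
        exact Submodule.sum_mem _ fun j _ =>
          Submodule.smul_mem _ _ (Submodule.subset_span ⟨j, rfl⟩)
      rw [h1, ← Submodule.map_span, h2, Submodule.map_top]
      exact Submodule.range_projectionOnto _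
    haveI : IsZLattice ℝ L := ⟨by rw [hL, Submodule.span_span_of_tower, hspanv]⟩
    haveI := ZLattice.module_finite ℝ L
    haveI := ZLattice.module_free ℝ L
    set b₀ := Module.Free.chooseBasis ℤ L with hb₀
    set B := Module.Basis.ofZLatticeBasis ℝ L b₀ with hB
    have hcard : 0 < Fintype.card (Module.Free.ChooseBasisIndex ℤ L) := by
      rw [← Module.finrank_eq_card_chooseBasisIndex, ZLattice.rank ℝ L]
      haveI : Nontrivial W := Submodule.nontrivial_iff_ne_bot.mpr hWbot
      exact Module.finrank_pos
    haveI : Nonempty (Module.Free.ChooseBasisIndex ℤ L) := Fintype.card_pos_iff.mp hcard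
    set i₀ : Module.Free.ChooseBasisIndex ℤ L := Classical.arbitrary _ with hi₀
    have hvL : ∀ j, v j ∈ L := fun j => Submodule.subset_span ⟨j, rfl⟩
    set nn : Fin m → ℤ := fun j => b₀.repr ⟨v j, hvL j⟩ i₀ with hnn
    have hkey : ∀ j, ((nn j : ℝ)) = B.repr (v j) i₀ := by
      intro j
      rw [hnn, hB]
      exact (Module.Basis.ofZLatticeBasis_repr_apply ℝ L b₀ ⟨v j, hvL j⟩ i₀).symm
    set q : Fin m → ℚ := fun j => (nn j : ℚ) with hq
    have hq0 : q ≠ 0 := by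
      intro h
      have hnn0 : ∀ j, B.repr (v j) i₀ = 0 := by
        intro j
        rw [← hkey j]
        have := congrFun h j
        simp only [hq, Pi.zero_apply] at this
        exact_mod_cast this
      have hker : Submodule.span ℝ (Set.range v) ≤ LinearMap.ker (B.coord i₀) := by
        rw [Submodule.span_le]
        rintro x ⟨j, rfl⟩
        simpa [Module.Basis.coord_apply] using hnn0 j
      rw [hspanv, top_le_iff] at hker
      have h1 : B.coord i₀ (B i₀) = 1 := by simp [Module.Basis.coord_apply]
      have h0 : B.coord i₀ (B i₀) = 0 := by
        have : B i₀ ∈ LinearMap.ker (B.coord i₀) := by rw [hker]; trivial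
        simpa using this
      rw [h1] at h0
      exact one_ne_zero h0
    apply hindep q hq0
    set G : (Fin m → ℝ) →ₗ[ℝ] ℝ := (B.coord i₀) ∘ₗ P with hG
    have hGapp : ∀ x : Fin m → ℝ, G x = B.coord i₀ (P x) := fun x => rfl
    have hμdecomp : (2 * Real.pi) • μ
        = ∑ j, μ j • (Pi.single j (2 * Real.pi) : Fin m → ℝ) := by
      funext i
      rw [Finset.sum_apply]
      have hite : ∀ j, (μ j • (Pi.single j (2 * Real.pi) : Fin m → ℝ)) i
          = if i = j then 2 * Real.pi * μ i else 0 := by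
        intro j
        by_cases h : i = j
        · subst h; simp [Pi.single_apply]; ring
        · simp [Pi.single_apply, h]
      rw [Finset.sum_congr rfl fun j _ => hite j, Finset.sum_ite_eq]
      simp
    calc ∑ j, (q j : ℝ) * μ j
        = ∑ j, G (μ j • (Pi.single j (2 * Real.pi) : Fin m → ℝ)) := by
          apply Finset.sum_congr rfl
          intro j _
          rw [map_smul, smul_eq_mul, hGapp]
          have : B.coord i₀ (P (Pi.single j (2 * Real.pi))) = (nn j : ℝ) := by
            rw [Module.Basis.coord_apply, ← hkey j]
          rw [this, hq]
          push_cast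
          ring
      _ = G ((2 * Real.pi) • μ) := by rw [← map_sum, ← hμdecomp]
      _ = 0 := by
          rw [map_smul, hGapp, hPV μ hμV]
          simp
  rw [dense_iff_closure_eq]
  apply Set.eq_univ_of_forall
  intro x
  have hx : x ∈ Γ := hVΓ (by rw [hVtop]; trivial)
  exact hx

/-- If `μ₁,…,μ_m` are `ℚ`-linearly independent reals, then for every `s₀ ∈ ℝ`
the image of the half-line `(s₀, ∞)` under `s ↦ (μ₁ s, …, μ_m s)`, taken modulo
`2πℤ^m`, is dense in the torus `ℝ^m / 2πℤ^m` (realized as the product of `m`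
copies of `ℝ / 2πℤ`). -/
theorem dense_line_in_torus
    (m : ℕ) (hm : 1 ≤ m) (μ : Fin m → ℝ)
    (hindep : ∀ q : Fin m → ℚ, q ≠ 0 → ∑ j, (q j : ℝ) * μ j ≠ 0)
    (s₀ : ℝ) :
    Dense ((fun s : ℝ => fun j : Fin m =>
      ((μ j * s : ℝ) : AddCircle (2 * Real.pi))) '' Set.Ioi s₀) := by
  haveI : Fact (0 < 2 * Real.pi) := ⟨Real.two_pi_pos⟩
  -- the additive hom version of the map
  set φ : ℝ →+ (Fin m → AddCircle (2 * Real.pi)) :=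
    { toFun := fun s j => ((μ j * s : ℝ) : AddCircle (2 * Real.pi))
      map_zero' := by funext j; simp
      map_add' := fun a b => by
        funext j
        show (((μ j * (a + b) : ℝ)) : AddCircle (2 * Real.pi)) = _
        rw [mul_add]
        push_cast
        rfl } with hφ
  have hφcont : Continuous ⇑φ :=
    continuous_pi fun j => (AddCircle.continuous_mk' _).comp (continuous_const.mul continuous_id)
  -- the projection ℝ^m → torus
  set prj : (Fin m → ℝ) →+ (Fin m → AddCircle (2 * Real.pi)) :=
    { toFun := fun x j => ((x j : ℝ) : AddCircle (2 * Real.pi))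
      map_zero' := by funext j; simp
      map_add' := fun a b => by
        funext j
        show (((a j + b j : ℝ)) : AddCircle (2 * Real.pi)) = _
        push_cast
        rfl } with hprj
  have hprjcont : Continuous ⇑prj :=
    continuous_pi fun j => (AddCircle.continuous_mk' _).comp (continuous_apply j)
  have hprjsurj : Function.Surjective ⇑prj := by
    intro y
    have h : ∀ j, ∃ r : ℝ, ((r : ℝ) : AddCircle (2 * Real.pi)) = y j := fun j =>
      QuotientAddGroup.mk_surjective (y j)
    choose x hx using h
    exact ⟨x, funext hx⟩
  -- Kronecker: the full line is dense
  have hKron : Dense (Set.range ⇑φ) := by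
    set K : AddSubgroup (Fin m → AddCircle (2 * Real.pi)) := φ.range.topologicalClosure with hK
    have hKclosed : IsClosed (K : Set (Fin m → AddCircle (2 * Real.pi))) := φ.range.isClosed_topologicalClosure
    have hΔK : AddSubgroup.closure
        (Set.range (fun s : ℝ => s • μ) ∪
          Set.range (fun j : Fin m => Pi.single j (2 * Real.pi)))
        ≤ K.comap prj := by
      rw [AddSubgroup.closure_le]
      rintro x (⟨s, rfl⟩ | ⟨j, rfl⟩)
      · show prj (s • μ) ∈ K
        have : prj (s • μ) = φ s := by
          funext j
          show (((s • μ) j : ℝ) : AddCircle (2 * Real.pi)) = ((μ j * s : ℝ) : AddCircle (2 * Real.pi))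
          rw [Pi.smul_apply, smul_eq_mul, mul_comm s (μ j)]
        rw [this]
        exact φ.range.le_topologicalClosure ⟨s, rfl⟩
      · show prj (Pi.single j (2 * Real.pi)) ∈ K
        have hz : prj (Pi.single j (2 * Real.pi)) = 0 := by
          funext i
          rw [Pi.zero_apply]
          simp only [hprj, AddMonoidHom.coe_mk, ZeroHom.coe_mk]
          by_cases h : i = j
          · subst h; rw [Pi.single_eq_same]; exact AddCircle.coe_period (2 * Real.pi)
          · rw [Pi.single_eq_of_ne h]; simp
        rw [hz]
        exact K.zero_mem
    have hdense := aux_dense_subgroup m μ hindep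
    rw [dense_iff_closure_eq] at hdense ⊢
    apply Set.eq_univ_of_univ_subset
    calc (Set.univ : Set (Fin m → AddCircle (2 * Real.pi)))
        = ⇑prj '' Set.univ := (Set.image_univ_of_surjective hprjsurj).symm
      _ = ⇑prj '' closure ↑(AddSubgroup.closure
            (Set.range (fun s : ℝ => s • μ) ∪
              Set.range (fun j : Fin m => Pi.single j (2 * Real.pi)))) := by rw [hdense]
      _ ⊆ closure (⇑prj '' ↑(AddSubgroup.closure
            (Set.range (fun s : ℝ => s • μ) ∪
              Set.range (fun j : Fin m => Pi.single j (2 * Real.pi))))) :=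
          image_closure_subset_closure_image hprjcont
      _ ⊆ closure (K : Set _) := closure_mono (by
          rintro y ⟨x, hxΔ, rfl⟩
          exact hΔK hxΔ)
      _ = (K : Set _) := hKclosed.closure_eq
      _ ⊆ closure (Set.range ⇑φ) := subset_rfl
  -- the positive half line
  have hS : Dense (⇑φ '' Set.Ioi (0:ℝ)) := by
    set S : Set (Fin m → AddCircle (2 * Real.pi)) := ⇑φ '' Set.Ioi (0:ℝ) with hSdef
    have hSadd : ∀ a ∈ S, ∀ b ∈ S, a + b ∈ S := by
      rintro _ ⟨s, hs, rfl⟩ _ ⟨t, ht, rfl⟩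
      exact ⟨s + t, Set.mem_Ioi.mpr (add_pos hs ht), φ.map_add s t⟩
    set T : AddSubmonoid (Fin m → AddCircle (2 * Real.pi)) :=
      { carrier := insert 0 S
        zero_mem' := Set.mem_insert 0 S
        add_mem' := by
          rintro a b (rfl | ha) hb
          · simpa using hb
          · rcases hb with rfl | hb
            · simpa using Or.inr ha
            · exact Or.inr (hSadd _ ha _ hb) } with hT
    have hmono' : AddSubmonoid.closure S ≤ T :=
      AddSubmonoid.closure_le.2 (Set.subset_insert 0 S)
    have hmono : (AddSubmonoid.closure S : Set _) ⊆ insert 0 S := hmono'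
    have hgrp : Set.range ⇑φ ⊆ (AddSubgroup.closure S : Set _) := by
      rintro _ ⟨s, rfl⟩
      by_cases hs : 0 < s
      · exact AddSubgroup.subset_closure ⟨s, hs, rfl⟩
      · have h1 : (0:ℝ) < |s| + 1 := by positivity
        have h2 : (0:ℝ) < s + (|s| + 1) := by
          have := neg_abs_le s
          linarith
        have : φ s = φ (s + (|s| + 1)) - φ (|s| + 1) := by
          rw [← φ.map_sub]
          congr 1
          ring
        rw [this]
        exact AddSubgroup.sub_mem _
          (AddSubgroup.subset_closure ⟨s + (|s| + 1), h2, rfl⟩)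
          (AddSubgroup.subset_closure ⟨|s| + 1, h1, rfl⟩)
    have h0S : (0 : Fin m → AddCircle (2 * Real.pi)) ∈ closure S := by
      have h01 : (0:ℝ) ∈ closure (Set.Ioi (0:ℝ)) := by
        rw [closure_Ioi]; exact Set.self_mem_Ici
      have := image_closure_subset_closure_image (s := Set.Ioi (0:ℝ)) hφcont
      have h02 : φ 0 ∈ ⇑φ '' closure (Set.Ioi (0:ℝ)) := ⟨0, h01, rfl⟩
      rw [φ.map_zero] at h02
      exact this h02
    have hclos := closure_addSubmonoidClosure_eq_closure_addSubgroupClosure S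
    rw [dense_iff_closure_eq]
    apply Set.eq_univ_of_univ_subset
    have huniv : (Set.univ : Set (Fin m → AddCircle (2 * Real.pi)))
        ⊆ closure ((AddSubgroup.closure S : AddSubgroup _) : Set _) := by
      rw [dense_iff_closure_eq] at hKron
      rw [← hKron]
      exact closure_mono hgrp
    have huniv2 : (Set.univ : Set (Fin m → AddCircle (2 * Real.pi)))
        ⊆ closure ((AddSubmonoid.closure S : AddSubmonoid _) : Set _) := by
      rw [hclos]
      exact huniv
    have hstep3 : closure ((AddSubmonoid.closure S : AddSubmonoid _) : Set _)
        ⊆ insert 0 (closure S) :=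
      calc closure ((AddSubmonoid.closure S : AddSubmonoid _) : Set _)
          ⊆ closure (insert 0 S) := closure_mono hmono
        _ = closure ({0} ∪ S) := by rw [Set.insert_eq]
        _ = closure {0} ∪ closure S := closure_union
        _ = {0} ∪ closure S := by rw [closure_singleton]
        _ = insert 0 (closure S) := (Set.insert_eq _ _).symm
    intro y hy
    rcases hstep3 (huniv2 hy) with rfl | hy'
    · exact h0S
    · exact hy'
  -- translate by φ s₀
  have himg : (fun s : ℝ => fun j : Fin m =>
      ((μ j * s : ℝ) : AddCircle (2 * Real.pi))) '' Set.Ioi s₀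
      = (fun y => φ s₀ + y) '' (⇑φ '' Set.Ioi (0:ℝ)) := by
    ext y
    constructor
    · rintro ⟨t, ht, rfl⟩
      refine ⟨φ (t - s₀), ⟨t - s₀, by simpa using ht, rfl⟩, ?_⟩
      show φ s₀ + φ (t - s₀) = φ t
      rw [← φ.map_add]
      congr 1
      ring
    · rintro ⟨_, ⟨u, hu, rfl⟩, rfl⟩
      refine ⟨s₀ + u, by simpa using hu, ?_⟩
      show φ (s₀ + u) = φ s₀ + φ u
      exact φ.map_add s₀ u
  rw [himg]
  have heq : (fun y => φ s₀ + y) '' (⇑φ '' Set.Ioi (0:ℝ))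
      = (fun y => -φ s₀ + y) ⁻¹' (⇑φ '' Set.Ioi (0:ℝ)) := by
    ext y
    constructor
    · rintro ⟨z, hz, rfl⟩
      simpa [neg_add_cancel_left] using hz
    · intro hy
      exact ⟨-φ s₀ + y, hy, by simp [add_neg_cancel_left]⟩
  rw [heq]
  exact hS.preimage (isOpenMap_add_left _)
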